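/- Write Q_N^{(g)} in 2×2 block form with 2^{N-1}×2^{N-1} blocks E_N, F_N, G_N, H_N (top-left, top-right, bottom-left, bottom-right). Then Q_{N+1}^{(g)}, viewed as a 4×4 array of 2^{N-1}×2^{N-1} blocks, equals [[a00^00 E_N, a01^01 F_N, a00^10 E_N, a01^11 F_N],[a00^00 G_N, a01^01 H_N, a00^10 G_N, a01^11 H_N],[a10^00 E_N, a11^01 F_N, a10^10 E_N, a11^11 F_N],[a10^00 G_N, a11^01 H_N, a10^10 G_N, a11^11 H_N]]. -/
import Mathlib


open Matrix Kronecker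

/-- Configuration space of `N` sites, each holding a state in `{0,1}`. -/
abbrev Conf (N : ℕ) := Fin N → Fin 2

/-- `Fin 2 × Conf N ≃ Conf (N+1)` by prepending the first bit. -/
def confEquiv (N : ℕ) : Fin 2 × Conf N ≃ Conf (N + 1) :=
  Fin.consEquiv (fun _ => Fin 2)

/-- `(Fin 2 × Fin 2) × Conf N ≃ Conf (N+2)` by prepending the first two bits. -/
def confEquiv2 (N : ℕ) : (Fin 2 × Fin 2) × Conf N ≃ Conf (N + 2) :=
  (((Equiv.prodAssoc (Fin 2) (Fin 2) (Conf N)).trans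
    ((Equiv.refl (Fin 2)).prodCongr (confEquiv N))).trans (confEquiv (N + 1)))

/-- The global operator `Q_N^{(g)}`, defined by `Q_1 = I_2` and
`Q_{N+1} = (I_2 ⊗ Q_N) (Q^{(l)} ⊗ I_{2^{N-1}})`. -/
def Qg {R : Type*} [CommRing R] (Ql : Matrix (Fin 2 × Fin 2) (Fin 2 × Fin 2) R) :
    (N : ℕ) → Matrix (Conf N) (Conf N) R
  | 0 => 1
  | 1 => 1
  | (N + 2) =>
      (Matrix.reindex (confEquiv (N + 1)) (confEquiv (N + 1))
          ((1 : Matrix (Fin 2) (Fin 2) R) ⊗ₖ Qg Ql (N + 1))) *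
      (Matrix.reindex (confEquiv2 N) (confEquiv2 N)
          (Ql ⊗ₖ (1 : Matrix (Conf N) (Conf N) R)))

/-- Top-left block `E`. -/
def blockTL {R : Type*} [CommRing R] {N : ℕ}
    (M : Matrix (Conf (N + 1)) (Conf (N + 1)) R) : Matrix (Conf N) (Conf N) R :=
  Matrix.of fun x y => M (Fin.cons 0 x) (Fin.cons 0 y)

/-- Top-right block `F`. -/
def blockTR {R : Type*} [CommRing R] {N : ℕ}
    (M : Matrix (Conf (N + 1)) (Conf (N + 1)) R) : Matrix (Conf N) (Conf N) R :=
  Matrix.of fun x y => M (Fin.cons 0 x) (Fin.cons 1 y)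

/-- Bottom-left block `G`. -/
def blockBL {R : Type*} [CommRing R] {N : ℕ}
    (M : Matrix (Conf (N + 1)) (Conf (N + 1)) R) : Matrix (Conf N) (Conf N) R :=
  Matrix.of fun x y => M (Fin.cons 1 x) (Fin.cons 0 y)

/-- Bottom-right block `H`. -/
def blockBR {R : Type*} [CommRing R] {N : ℕ}
    (M : Matrix (Conf (N + 1)) (Conf (N + 1)) R) : Matrix (Conf N) (Conf N) R :=
  Matrix.of fun x y => M (Fin.cons 1 x) (Fin.cons 1 y)


/-- block structure of `Q_{N+1}^{(g)}` (entrywise form): for all first bits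
`b₁ b₂` (row) and `c₁ c₂` (column),
`Q_{N+1}^{(g)}((b₁,b₂)x, (c₁,c₂)y) = a_{b₁ c₂}^{c₁ c₂} · Q_N^{(g)}(b₂ x, c₂ y)`,
which is exactly the 4×4 block array of the lemma. -/
theorem stmt1 (Ql : Matrix (Fin 2 × Fin 2) (Fin 2 × Fin 2) ℂ) (hvan : ∀ i j k l : Fin 2, j ≠ l → Ql (k, l) (i, j) = 0) (N : ℕ)
    (b₁ b₂ c₁ c₂ : Fin 2) (x y : Conf N) :
    Qg Ql (N + 2) (Fin.cons b₁ (Fin.cons b₂ x)) (Fin.cons c₁ (Fin.cons c₂ y)) =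
      Ql (b₁, c₂) (c₁, c₂) * Qg Ql (N + 1) (Fin.cons b₂ x) (Fin.cons c₂ y) := by
  show (_ * _ : Matrix _ _ ℂ) _ _ = _
  rw [Matrix.mul_apply]
  rw [← Equiv.sum_comp (confEquiv2 N)]
  rw [Fintype.sum_prod_type]
  rw [Fintype.sum_prod_type]
  simp only [confEquiv2, confEquiv, Equiv.trans_apply, Equiv.prodCongr_apply,
    Equiv.prodAssoc_apply, Equiv.coe_refl, Prod.map, id, Fin.consEquiv_apply,
    Matrix.reindex_apply, Matrix.submatrix_apply, Equiv.symm_trans_apply,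
    Equiv.prodCongr_symm, Equiv.prodAssoc_symm_apply, Equiv.prodCongr_apply,
    Fin.consEquiv_symm_apply, Fin.cons_zero, Fin.cons_succ, Matrix.kroneckerMap_apply,
    Matrix.one_apply, Fin.cons_self_tail]
  rw [Fin.sum_univ_two, Fin.sum_univ_two]
  simp only [Fin.consEquiv, Equiv.coe_fn_mk, Fin.tail_cons, Equiv.refl_symm, Equiv.refl_apply, Fin.cons_zero]
  rw [Fin.sum_univ_two]
  simp only [mul_ite, mul_one, mul_zero, Finset.sum_ite_eq', Finset.mem_univ, if_true]
  fin_cases b₁ <;> fin_cases c₂ <;>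
    simp [hvan, mul_comm, mul_assoc, mul_left_comm]
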